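/- Let K be a field and let F = K(X,Y) be the rational function field in two variables over K. Then X + Y does not belong to K(X)·K(Y); that is, there exist no u ∈ K(X) and v ∈ K(Y) with X + Y = u·v. -/
import Mathlib


noncomputable section

/-- The rational function field `K(X,Y)`, realized as the fraction field of the
polynomial ring `K[X,Y]` in two variables. -/
abbrev RatFuncTwo (K : Type*) [Field K] : Type _ :=
  FractionRing (MvPolynomial (Fin 2) K)

/-- The image in `K(X,Y)` of the variable `Xᵢ`. -/
def genVar (K : Type*) [Field K] (i : Fin 2) : RatFuncTwo K :=
  algebraMap (MvPolynomial (Fin 2) K) (RatFuncTwo K) (MvPolynomial.X i)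

/-- The image of `K` in `K(X,Y)`. -/
def constSet (K : Type*) [Field K] : Set (RatFuncTwo K) :=
  Set.range ((algebraMap (MvPolynomial (Fin 2) K) (RatFuncTwo K)).comp
    (MvPolynomial.C : K →+* MvPolynomial (Fin 2) K))

/-- The subfield `K(Xᵢ)` of `K(X,Y)` generated by (the image of) `K` together with `Xᵢ`. -/
def adjoinVar (K : Type*) [Field K] (i : Fin 2) : Subfield (RatFuncTwo K) :=
  Subfield.closure (constSet K ∪ {genVar K i})

section Aux
variable (K : Type*) [Field K]

/-- The embedding `K[T] → K[X,Y]`, `T ↦ Xᵢ`. -/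
def psi (i : Fin 2) : Polynomial K →ₐ[K] MvPolynomial (Fin 2) K :=
  Polynomial.aeval (MvPolynomial.X i)

/-- The specialization `K[X,Y] → K[T]`, `X ↦ T`, `Y ↦ -T`. -/
def phi : MvPolynomial (Fin 2) K →ₐ[K] Polynomial K :=
  MvPolynomial.aeval (fun i => if i = 0 then Polynomial.X else -Polynomial.X)

lemma closure_le_range (i : Fin 2) :
    Subring.closure (Set.range (MvPolynomial.C : K →+* MvPolynomial (Fin 2) K)
      ∪ {MvPolynomial.X i}) ≤ (psi K i).range.toSubring := by
  rw [Subring.closure_le]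
  rintro p (⟨k, rfl⟩ | rfl)
  · exact ⟨Polynomial.C k, by simp [psi]⟩
  · exact ⟨Polynomial.X, by simp [psi]⟩

lemma mem_adjoin (i : Fin 2) {u : RatFuncTwo K} (hu : u ∈ adjoinVar K i) :
    ∃ a b : Polynomial K,
      u = algebraMap _ _ (psi K i a) / algebraMap _ _ (psi K i b) := by
  rw [adjoinVar, Subfield.mem_closure_iff] at hu
  obtain ⟨y, hy, z, hz, rfl⟩ := hu
  have himg : constSet K ∪ {genVar K i} =
      (algebraMap (MvPolynomial (Fin 2) K) (RatFuncTwo K)) ''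
        (Set.range (MvPolynomial.C : K →+* MvPolynomial (Fin 2) K)
          ∪ {MvPolynomial.X i}) := by
    rw [Set.image_union, Set.image_singleton]
    congr 1
    rw [constSet, RingHom.coe_comp, Set.range_comp]
  rw [himg, ← RingHom.map_closure] at hy hz
  obtain ⟨p, hp, rfl⟩ := hy
  obtain ⟨q, hq, rfl⟩ := hz
  obtain ⟨a, ha⟩ := closure_le_range K i hp
  obtain ⟨b, hb⟩ := closure_le_range K i hq
  refine ⟨a, b, ?_⟩
  rw [← ha, ← hb]
  rfl

lemma phi_psi_zero (p : Polynomial K) : phi K (psi K 0 p) = p := by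
  rw [psi, ← Polynomial.aeval_algHom_apply]
  have : phi K (MvPolynomial.X 0) = Polynomial.X := by simp [phi]
  rw [this, Polynomial.aeval_X_left_apply]

lemma phi_psi_one (p : Polynomial K) :
    phi K (psi K 1 p) = Polynomial.aeval (-Polynomial.X : Polynomial K) p := by
  rw [psi, ← Polynomial.aeval_algHom_apply]
  have : phi K (MvPolynomial.X 1) = -Polynomial.X := by simp [phi]
  rw [this]

lemma aeval_neg_X_inj : Function.Injective
    (Polynomial.aeval (-Polynomial.X : Polynomial K) : Polynomial K →ₐ[K] Polynomial K) := by
  intro p q h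
  have key : ∀ r : Polynomial K,
      Polynomial.aeval (-Polynomial.X : Polynomial K)
        (Polynomial.aeval (-Polynomial.X : Polynomial K) r) = r := by
    intro r
    rw [← Polynomial.aeval_algHom_apply]
    simp
  have := congrArg (Polynomial.aeval (-Polynomial.X : Polynomial K)) h
  rwa [key, key] at this

end Aux


/-- In `K(X,Y)`, the element `X + Y` does not belong to `K(X)·K(Y)`:
there are no `u ∈ K(X)` and `v ∈ K(Y)` with `X·Y = u + v`. -/
theorem add_gen_not_mem_mul (K : Type*) [Field K] :
    ¬ ∃ u ∈ adjoinVar K 0, ∃ v ∈ adjoinVar K 1,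
        genVar K 0 + genVar K 1 = u * v := by
  rintro ⟨u, hu, v, hv, heq⟩
  obtain ⟨a, b, rfl⟩ := mem_adjoin K 0 hu
  obtain ⟨c, d, rfl⟩ := mem_adjoin K 1 hv
  have hinj : Function.Injective
      (algebraMap (MvPolynomial (Fin 2) K) (RatFuncTwo K)) :=
    IsFractionRing.injective _ _
  have hXY : (MvPolynomial.X 0 + MvPolynomial.X 1 : MvPolynomial (Fin 2) K) ≠ 0 := by
    intro h
    have := congrArg (MvPolynomial.eval (fun i : Fin 2 => if i = 0 then (1 : K) else 0)) h
    simp at this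
  have hadd : genVar K 0 + genVar K 1
      = algebraMap (MvPolynomial (Fin 2) K) (RatFuncTwo K)
        (MvPolynomial.X 0 + MvPolynomial.X 1) :=
    (map_add (algebraMap (MvPolynomial (Fin 2) K) (RatFuncTwo K)) _ _).symm
  have hne : genVar K 0 + genVar K 1 ≠ 0 := by
    rw [hadd]
    exact fun h => hXY (hinj (by rw [map_zero]; exact h))
  have ha : algebraMap _ (RatFuncTwo K) (psi K 0 a) ≠ 0 := by
    intro h; apply hne; rw [heq, h, zero_div, zero_mul]
  have hc : algebraMap _ (RatFuncTwo K) (psi K 1 c) ≠ 0 := by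
    intro h; apply hne; rw [heq, h, zero_div, mul_zero]
  have hb : algebraMap _ (RatFuncTwo K) (psi K 0 b) ≠ 0 := by
    intro h; apply hne; rw [heq, h, div_zero, zero_mul]
  have hd : algebraMap _ (RatFuncTwo K) (psi K 1 d) ≠ 0 := by
    intro h; apply hne; rw [heq, h, div_zero, mul_zero]
  have heq2 : (genVar K 0 + genVar K 1) *
      (algebraMap _ (RatFuncTwo K) (psi K 0 b) * algebraMap _ (RatFuncTwo K) (psi K 1 d))
      = algebraMap _ (RatFuncTwo K) (psi K 0 a) * algebraMap _ (RatFuncTwo K) (psi K 1 c) := by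
    rw [heq, div_mul_div_comm]
    exact div_mul_cancel₀ _ (mul_ne_zero hb hd)
  have key : (MvPolynomial.X 0 + MvPolynomial.X 1) * (psi K 0 b * psi K 1 d)
      = psi K 0 a * psi K 1 c := by
    apply hinj
    rw [map_mul, map_mul, map_mul, ← hadd]
    exact heq2
  have hphi := congrArg (phi K) key
  have h0 : phi K (MvPolynomial.X 0 + MvPolynomial.X 1 : MvPolynomial (Fin 2) K) = 0 := by
    simp [phi]
  rw [map_mul, h0, zero_mul, map_mul] at hphi
  rcases mul_eq_zero.mp hphi.symm with h | h
  · rw [phi_psi_zero] at h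
    exact ha (by rw [h, map_zero, map_zero])
  · rw [phi_psi_one] at h
    have : c = 0 := aeval_neg_X_inj K (by rw [h, map_zero])
    exact hc (by rw [this, map_zero, map_zero])

end
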